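/- With the single-spin-flip neighborhood structure on Ω and an arbitrary function H : Ω → ℝ, every local minimum σ of H that is not a global minimum, with depth d, is contained in the bottom of a cup of depth d: there exists a cup C ⊆ Ω with σ ∈ B(C) and d(C) = d. -/

import Mathlib

open Finset Filter
open scoped Classical

noncomputable section

/-- The real spin value of a Boolean spin: `true ↦ +1`, `false ↦ -1`. -/
def spin (b : Bool) : ℝ := if b then 1 else -1

variable {V : Type*} [Fintype V] [DecidableEq V]

/-- The configuration obtained from `σ` by flipping the spin at `x`. -/
def flipConf (σ : V → Bool) (x : V) : V → Bool := Function.update σ x (!(σ x))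

/-- The Ising Hamiltonian with couplings `J` and external fields `h`. -/
def Ham (J : V → V → ℝ) (h : V → ℝ) (σ : V → Bool) : ℝ :=
  -(1 / 2) * ∑ x : V, ∑ y : V, J x y * spin (σ x) * spin (σ y)
    - ∑ x : V, h x * spin (σ x)

/-- `Ecost J h x σ = H(σ^x) - H(σ)`, the energetic cost of flipping the spin at `x`. -/
def Ecost (J : V → V → ℝ) (h : V → ℝ) (x : V) (σ : V → Bool) : ℝ :=
  Ham J h (flipConf σ x) - Ham J h σ

/-- Metropolis acceptance probability `exp(-β E_y(σ)^+)`. -/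
def acc (J : V → V → ℝ) (h : V → ℝ) (β : ℝ) (σ : V → Bool) (y : V) : ℝ :=
  Real.exp (-β * max (Ecost J h y σ) 0)

/-- The Digital Annealer transition matrix. -/
def Pda (J : V → V → ℝ) (h : V → ℝ) (β : ℝ) (σ τ : V → Bool) : ℝ :=
  if τ = σ then ∏ y : V, (1 - acc J h β σ y)
  else ∑ x ∈ Finset.univ.filter (fun x => τ = flipConf σ x),
        ∑ S ∈ Finset.univ.powerset.filter (fun S : Finset V => x ∈ S),
          ((S.card : ℝ))⁻¹ * (∏ y ∈ S, acc J h β σ y) * ∏ y ∈ Sᶜ, (1 - acc J h β σ y)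

/-- The Gibbs distribution at inverse temperature `β`. -/
def gibbs (J : V → V → ℝ) (h : V → ℝ) (β : ℝ) (σ : V → Bool) : ℝ :=
  Real.exp (-β * Ham J h σ) / ∑ τ : V → Bool, Real.exp (-β * Ham J h τ)

/-- The quantity `R(σ, σ^x)` from the paper. -/
def Rw (J : V → V → ℝ) (h : V → ℝ) (β : ℝ) (σ : V → Bool) (x : V) : ℝ :=
  ∑ S ∈ (Finset.univ.erase x).powerset,
    ((S.card : ℝ) + 1)⁻¹ * (∏ y ∈ S, acc J h β σ y) *
      ∏ y ∈ (Finset.univ.erase x) \ S, (1 - acc J h β σ y)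

/-- `τ` is reachable from `σ` at height `E`. -/
def Reachable (H : (V → Bool) → ℝ) (E : ℝ) (σ τ : V → Bool) : Prop :=
  (σ = τ ∧ H σ ≤ E) ∨
    ∃ n : ℕ, 1 ≤ n ∧ ∃ p : ℕ → (V → Bool), p 0 = σ ∧ p n = τ ∧
      (∀ k, 1 ≤ k → k ≤ n → ∃ x, p k = flipConf (p (k - 1)) x) ∧
      (∀ i ≤ n, H (p i) ≤ E)

/-- `σ` is a local minimum of `H`. -/
def IsLocMin (H : (V → Bool) → ℝ) (σ : V → Bool) : Prop :=
  ¬ ∃ τ, H τ < H σ ∧ Reachable H (H σ) σ τ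

/-- `σ` is a ground state (global minimum) of `H`. -/
def IsGround (H : (V → Bool) → ℝ) (σ : V → Bool) : Prop := ∀ τ, H σ ≤ H τ

/-- The depth of a local minimum which is not a ground state: the smallest `E > 0` such
that some strictly lower state is reachable from `σ` at height `H(σ) + E`. -/
def depth (H : (V → Bool) → ℝ) (σ : V → Bool) : ℝ :=
  sInf {E : ℝ | 0 < E ∧ ∃ τ, H τ < H σ ∧ Reachable H (H σ + E) σ τ}

/-- `γ*`: the maximum of the depths of the local minima of `H` that are not ground
states (`0` if every local minimum is a ground state). -/
def gammaStar (H : (V → Bool) → ℝ) : ℝ :=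
  sSup ({0} ∪ {d : ℝ | ∃ σ, IsLocMin H σ ∧ ¬ IsGround H σ ∧ d = depth H σ})

end

variable {V : Type*} [Fintype V] [DecidableEq V]

/-- A set `C` of configurations is a cup if for some height `E`, `C` equals the set of
states reachable from any of its elements at height `E`. -/
def IsCup (H : (V → Bool) → ℝ) (C : Set (V → Bool)) : Prop :=
  ∃ E : ℝ, ∀ σ ∈ C, C = {τ | Reachable H E σ τ}

/-- The boundary of a set of configurations: states outside `C` that are neighbors
(single spin flips) of states in `C`. -/
def cupBoundary (C : Set (V → Bool)) : Set (V → Bool) :=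
  {τ | τ ∉ C ∧ ∃ σ ∈ C, ∃ x : V, τ = flipConf σ x}

/-- The bottom of a cup: the set of its states of minimal energy. -/
def cupBottom (H : (V → Bool) → ℝ) (C : Set (V → Bool)) : Set (V → Bool) :=
  {σ | σ ∈ C ∧ ∀ τ ∈ C, H σ ≤ H τ}

/-- The depth of a cup: the minimal energy on its boundary minus the minimal energy
inside. -/
noncomputable def cupDepth (H : (V → Bool) → ℝ) (C : Set (V → Bool)) : ℝ :=
  sInf (H '' cupBoundary C) - sInf (H '' C)

section Aux

lemma flipConf_flipConf (σ : V → Bool) (x : V) : flipConf (flipConf σ x) x = σ := by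
  funext y
  rcases eq_or_ne y x with rfl | hy
  · simp [flipConf]
  · simp [flipConf, Function.update, hy]

lemma Reachable.mono {H : (V → Bool) → ℝ} {E E' : ℝ} (hE : E ≤ E') {σ τ : V → Bool}
    (h : Reachable H E σ τ) : Reachable H E' σ τ := by
  rcases h with ⟨rfl, h⟩ | ⟨n, hn, p, h0, hN, hs, hh⟩
  · exact Or.inl ⟨rfl, h.trans hE⟩
  · exact Or.inr ⟨n, hn, p, h0, hN, hs, fun i hi => (hh i hi).trans hE⟩

lemma Reachable.refl {H : (V → Bool) → ℝ} {E : ℝ} {σ : V → Bool} (h : H σ ≤ E) :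
    Reachable H E σ σ := Or.inl ⟨rfl, h⟩

lemma Reachable.le_right {H : (V → Bool) → ℝ} {E : ℝ} {σ τ : V → Bool}
    (h : Reachable H E σ τ) : H τ ≤ E := by
  rcases h with ⟨rfl, h⟩ | ⟨n, hn, p, h0, hN, hs, hh⟩
  · exact h
  · exact hN ▸ hh n le_rfl

lemma Reachable.le_left {H : (V → Bool) → ℝ} {E : ℝ} {σ τ : V → Bool}
    (h : Reachable H E σ τ) : H σ ≤ E := by
  rcases h with ⟨rfl, h⟩ | ⟨n, hn, p, h0, hN, hs, hh⟩
  · exact h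
  · exact h0 ▸ hh 0 (Nat.zero_le n)

lemma Reachable.step {H : (V → Bool) → ℝ} {E : ℝ} {σ τ : V → Bool}
    (h : Reachable H E σ τ) (x : V) (hx : H (flipConf τ x) ≤ E) :
    Reachable H E σ (flipConf τ x) := by
  rcases h with ⟨rfl, h⟩ | ⟨n, hn, p, h0, hN, hs, hh⟩
  · refine Or.inr ⟨1, le_rfl, fun k => if k = 0 then σ else flipConf σ x, by simp, by simp, ?_, ?_⟩
    · intro k hk1 hk2
      have hk : k = 1 := le_antisymm hk2 hk1
      subst hk
      exact ⟨x, by simp⟩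
    · intro i hi
      interval_cases i
      · simpa using h
      · simpa using hx
  · refine Or.inr ⟨n + 1, by omega, fun k => if k ≤ n then p k else flipConf τ x,
      by simp [h0], by simp, ?_, ?_⟩
    · intro k hk1 hk2
      by_cases hk : k ≤ n
      · have hk' : k - 1 ≤ n := by omega
        simpa [hk, hk'] using hs k hk1 hk
      · have hk' : k = n + 1 := by omega
        subst hk'
        refine ⟨x, ?_⟩
        simp [hN]
    · intro i hi
      by_cases hin : i ≤ n
      · simpa [hin] using hh i hin
      · simpa [hin] using hx

lemma Reachable.trans {H : (V → Bool) → ℝ} {E : ℝ} {σ τ ρ : V → Bool}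
    (h1 : Reachable H E σ τ) (h2 : Reachable H E τ ρ) : Reachable H E σ ρ := by
  rcases h2 with ⟨rfl, h⟩ | ⟨n, hn, p, h0, hN, hs, hh⟩
  · exact h1
  · have key : ∀ k, k ≤ n → Reachable H E σ (p k) := by
      intro k
      induction k with
      | zero => intro _; exact h0 ▸ h1
      | succ m ih =>
        intro hm
        obtain ⟨x, hx⟩ := hs (m + 1) (by omega) hm
        have hx' : p (m + 1) = flipConf (p m) x := by simpa using hx
        have hxle : H (flipConf (p m) x) ≤ E := hx' ▸ hh (m + 1) hm
        have := (ih (by omega)).step x hxle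
        rwa [← hx'] at this
    exact hN ▸ key n le_rfl

lemma Reachable.symm {H : (V → Bool) → ℝ} {E : ℝ} {σ τ : V → Bool}
    (h : Reachable H E σ τ) : Reachable H E τ σ := by
  rcases h with ⟨rfl, h⟩ | ⟨n, hn, p, h0, hN, hs, hh⟩
  · exact Or.inl ⟨rfl, h⟩
  · refine Or.inr ⟨n, hn, fun k => p (n - k), by simp [hN], by simp [h0], ?_, ?_⟩
    · intro k hk1 hk2
      obtain ⟨x, hx⟩ := hs (n - k + 1) (by omega) (by omega)
      have h1 : n - k + 1 - 1 = n - k := by omega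
      have h2 : n - (k - 1) = n - k + 1 := by omega
      rw [h1] at hx
      refine ⟨x, ?_⟩
      show p (n - k) = flipConf (p (n - (k - 1))) x
      rw [h2, hx, flipConf_flipConf]
    · intro i hi
      exact hh (n - i) (by omega)

lemma reachable_of_all_le {H : (V → Bool) → ℝ} {E : ℝ} (hE : ∀ ρ : V → Bool, H ρ ≤ E)
    (σ τ : V → Bool) : Reachable H E σ τ := by
  suffices h : ∀ n : ℕ, ∀ τ : V → Bool,
      (Finset.univ.filter fun x => σ x ≠ τ x).card = n → Reachable H E σ τ by
    exact h _ τ rfl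
  intro n
  induction n with
  | zero =>
    intro τ hc
    have : σ = τ := by
      funext y
      by_contra hy
      have : y ∈ Finset.univ.filter fun x => σ x ≠ τ x := by simp [hy]
      rw [Finset.card_eq_zero] at hc
      simp [hc] at this
    exact this ▸ Reachable.refl (hE σ)
  | succ m ih =>
    intro τ hc
    have hne : (Finset.univ.filter fun x => σ x ≠ τ x).Nonempty := by
      rw [← Finset.card_pos, hc]; omega
    obtain ⟨x, hx⟩ := hne
    have hxne : σ x ≠ τ x := by simpa using hx
    have hflip : (Finset.univ.filter fun y => σ y ≠ (flipConf τ x) y)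
        = (Finset.univ.filter fun y => σ y ≠ τ y).erase x := by
      ext y
      rcases eq_or_ne y x with rfl | hy
      · have hv : flipConf τ y y = σ y := by
          cases hσ : σ y <;> cases hτ : τ y <;> simp_all [flipConf]
        simp [hv]
      · simp [flipConf, Function.update, hy]
    have hcard : (Finset.univ.filter fun y => σ y ≠ (flipConf τ x) y).card = m := by
      rw [hflip, Finset.card_erase_of_mem hx, hc]
      omega
    have h1 := ih (flipConf τ x) hcard
    have := h1.step x (hE _)
    rwa [flipConf_flipConf] at this

/-- Any reachability can be lowered to the level of some actual `H`-value. -/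
lemma reachable_down {H : (V → Bool) → ℝ} {E : ℝ} {σ τ : V → Bool}
    (h : Reachable H E σ τ) :
    ∃ ρ : V → Bool, H ρ ≤ E ∧ Reachable H (H ρ) σ τ := by
  rcases h with ⟨rfl, h⟩ | ⟨n, hn, p, h0, hN, hs, hh⟩
  · exact ⟨σ, h, Reachable.refl le_rfl⟩
  · have hne : ((Finset.range (n + 1)).image (fun i => H (p i))).Nonempty := by
      simp
    obtain ⟨i0, hi0, hMi0⟩ := Finset.mem_image.mp (Finset.max'_mem _ hne)
    have hle : ∀ i, i ≤ n →
        H (p i) ≤ ((Finset.range (n + 1)).image (fun i => H (p i))).max' hne := by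
      intro i hi
      have hmem : i ∈ Finset.range (n + 1) := Finset.mem_range.mpr (by omega)
      apply Finset.le_max'
      exact Finset.mem_image.mpr ⟨i, hmem, rfl⟩
    refine ⟨p i0, ?_, ?_⟩
    · exact hh i0 (Nat.lt_succ_iff.mp (Finset.mem_range.mp hi0))
    · rw [hMi0]
      exact Or.inr ⟨n, hn, p, h0, hN, hs, fun i hi => hle i hi⟩

end Aux

theorem localMin_mem_bottom_of_cup
    (H : (V → Bool) → ℝ) (σ : V → Bool) (d : ℝ)
    (hmin : IsLocMin H σ) (hng : ¬ IsGround H σ) (hd : d = depth H σ) :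
    ∃ C : Set (V → Bool), IsCup H C ∧ σ ∈ cupBottom H C ∧ cupDepth H C = d := by
  classical
  have hΩ : Nonempty (V → Bool) := ⟨fun _ => false⟩
  -- the finite set of "active" levels
  set L : Finset ℝ := (Finset.univ.image H).filter
    (fun F => ∃ τ, H τ < H σ ∧ Reachable H F σ τ) with hL
  have hLne : L.Nonempty := by
    obtain ⟨τ₀, hτ₀⟩ := not_forall.mp hng
    have hτ₀' : H τ₀ < H σ := lt_of_not_ge hτ₀
    have hEtopne : (Finset.univ.image H).Nonempty := ⟨H σ, Finset.mem_image.mpr ⟨σ, Finset.mem_univ σ, rfl⟩⟩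
    set E₀ := (Finset.univ.image H).max' hEtopne with hE₀
    have hall : ∀ ρ : V → Bool, H ρ ≤ E₀ := fun ρ =>
      Finset.le_max' _ _ (Finset.mem_image.mpr ⟨ρ, Finset.mem_univ ρ, rfl⟩)
    exact ⟨E₀, Finset.mem_filter.mpr ⟨Finset.max'_mem _ hEtopne,
      τ₀, hτ₀', reachable_of_all_le hall σ τ₀⟩⟩
  set m : ℝ := L.min' hLne with hm
  obtain ⟨hmIm, τs, hτs, hreach⟩ := Finset.mem_filter.mp (L.min'_mem hLne)
  -- `m` is a lower bound for all levels at which a lower state is reachable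
  have hmlb : ∀ F : ℝ, (∃ τ, H τ < H σ ∧ Reachable H F σ τ) → m ≤ F := by
    rintro F ⟨τ, hτ, hr⟩
    obtain ⟨ρ, hρF, hρr⟩ := reachable_down hr
    have : H ρ ∈ L := Finset.mem_filter.mpr
      ⟨Finset.mem_image.mpr ⟨ρ, Finset.mem_univ ρ, rfl⟩, τ, hτ, hρr⟩
    exact (L.min'_le _ this).trans hρF
  have hσm : H σ < m := by
    by_contra hc
    push_neg at hc
    exact hmin ⟨τs, hτs, hreach.mono hc⟩
  -- the depth equals `m - H σ`
  have hdepth : d = m - H σ := by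
    rw [hd, depth]
    have hset : {E : ℝ | 0 < E ∧ ∃ τ, H τ < H σ ∧ Reachable H (H σ + E) σ τ}
        = Set.Ici (m - H σ) := by
      ext E
      constructor
      · rintro ⟨hE, τ, hτ, hr⟩
        have := hmlb (H σ + E) ⟨τ, hτ, hr⟩
        simp only [Set.mem_Ici]
        linarith
      · intro hE
        simp only [Set.mem_Ici] at hE
        refine ⟨by linarith, τs, hτs, hreach.mono (by linarith)⟩
    rw [hset, csInf_Ici]
  -- the working level: largest value of `H` strictly below `m`
  have hEne : ((Finset.univ.image H).filter (fun F => F < m)).Nonempty :=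
    ⟨H σ, Finset.mem_filter.mpr ⟨Finset.mem_image.mpr ⟨σ, Finset.mem_univ σ, rfl⟩, hσm⟩⟩
  set E : ℝ := ((Finset.univ.image H).filter (fun F => F < m)).max' hEne with hE
  have hσE : H σ ≤ E := by
    rw [hE]
    apply Finset.le_max'
    exact Finset.mem_filter.mpr ⟨Finset.mem_image.mpr ⟨σ, Finset.mem_univ σ, rfl⟩, hσm⟩
  have hEm : E < m := (Finset.mem_filter.mp (Finset.max'_mem _ hEne)).2
  have hgap : ∀ ρ : V → Bool, H ρ < m → H ρ ≤ E := by
    intro ρ hρ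
    rw [hE]
    apply Finset.le_max'
    exact Finset.mem_filter.mpr ⟨Finset.mem_image.mpr ⟨ρ, Finset.mem_univ ρ, rfl⟩, hρ⟩
  -- the cup
  set C : Set (V → Bool) := {τ | Reachable H E σ τ} with hC
  have hσC : σ ∈ C := Reachable.refl hσE
  -- every state in C has energy at least H σ
  have hbot : ∀ τ ∈ C, H σ ≤ H τ := by
    intro τ hτ
    by_contra hc
    push_neg at hc
    have := hmlb E ⟨τ, hc, hτ⟩
    linarith
  -- C is a cup
  have hcup : IsCup H C := by
    refine ⟨E, fun ρ hρ => Set.ext fun τ => ⟨fun hτ => ?_, fun hτ => ?_⟩⟩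
    · exact Reachable.trans (Reachable.symm hρ) hτ
    · exact Reachable.trans hρ hτ
  -- every boundary state has energy at least m
  have hbd : ∀ τ ∈ cupBoundary C, m ≤ H τ := by
    rintro τ ⟨hτn, ρ, hρ, x, rfl⟩
    by_contra hc
    push_neg at hc
    exact hτn (Reachable.step hρ x (hgap _ hc))
  -- there is a boundary state of energy exactly m
  have hbdmem : ∃ τ ∈ cupBoundary C, H τ = m := by
    rcases hreach with ⟨heq, _⟩ | ⟨n, hn, p, h0, hN, hs, hh⟩
    · exact absurd (heq ▸ hτs) (lt_irrefl _)
    · have hpn : p n ∉ C := by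
        intro hmem
        have := hbot (p n) hmem
        rw [hN] at this
        linarith
      have hex : ∃ k, p k ∉ C := ⟨n, hpn⟩
      set k := Nat.find hex with hk
      have hkspec : p k ∉ C := Nat.find_spec hex
      have hkn : k ≤ n := Nat.find_min' hex hpn
      have hk1 : 1 ≤ k := by
        rcases Nat.eq_zero_or_pos k with h | h
        · exact absurd (h ▸ hkspec) (by rw [h0]; simpa using hσC)
        · exact h
      have hkm : p (k - 1) ∈ C := by
        by_contra hc
        have : k ≤ k - 1 := Nat.find_le hc
        omega
      obtain ⟨x, hx⟩ := hs k hk1 hkn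
      refine ⟨p k, ⟨hkspec, p (k - 1), hkm, x, hx⟩, ?_⟩
      refine le_antisymm ?_ (hbd _ ⟨hkspec, p (k - 1), hkm, x, hx⟩)
      exact hh k hkn
  -- compute the two infima
  have hInfC : sInf (H '' C) = H σ := by
    refine IsLeast.csInf_eq ⟨⟨σ, hσC, rfl⟩, ?_⟩
    rintro y ⟨τ, hτ, rfl⟩
    exact hbot τ hτ
  have hInfB : sInf (H '' cupBoundary C) = m := by
    obtain ⟨τ, hτ, hHτ⟩ := hbdmem
    refine IsLeast.csInf_eq ⟨⟨τ, hτ, hHτ⟩, ?_⟩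
    rintro y ⟨ρ, hρ, rfl⟩
    exact hbd ρ hρ
  refine ⟨C, hcup, ⟨hσC, hbot⟩, ?_⟩
  rw [cupDepth, hInfC, hInfB, hdepth]
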